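/- arXiv:2204.13370 — 6 statements merged into one kernel-verified Lean document; each statement's English description precedes it below -/
import Mathlib

section
/- Let f : ℝⁿ → ℝ be continuously differentiable, let x ∈ ℝⁿ, let p̄ be a unit vector with ⟨∇f(x), p̄⟩ < 0, let v > 0 be such that the function w ↦ f(x + w·p̄) is strictly convex on [0, v], let t > 0, and suppose u = x + w·p̄ with w = −t·⟨∇f(u), p̄⟩, w ∈ (0, v], and ⟨∇f(u), p̄⟩ ≤ 0. Then there exists c ∈ (0, 1) such that c·|⟨∇f(x), p̄⟩| = |⟨∇f(u), p̄⟩| and the Armijo-type inequality f(u) ≤ f(x) + c·w·⟨∇f(x), p̄⟩ holds. -/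
open scoped RealInnerProductSpace

/-- existence of an Armijo parameter `c ∈ (0,1)` for a DPPM update along a
direction of strict local convexity (Lemma 5 of the paper). -/
theorem dppm_armijo_parameter {n : ℕ} (f : EuclideanSpace ℝ (Fin n) → ℝ)
    (hf : ContDiff ℝ 1 f) (x : EuclideanSpace ℝ (Fin n))
    (p : EuclideanSpace ℝ (Fin n)) (hp : ‖p‖ = 1)
    (hdesc : ⟪gradient f x, p⟫ < 0)
    (v : ℝ) (hv : 0 < v)
    (hconv : StrictConvexOn ℝ (Set.Icc (0:ℝ) v) (fun w : ℝ => f (x + w • p)))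
    (t : ℝ) (ht : 0 < t)
    (u : EuclideanSpace ℝ (Fin n)) (w : ℝ)
    (hu : u = x + w • p)
    (hw : w = -t * ⟪gradient f u, p⟫)
    (hwmem : w ∈ Set.Ioc (0:ℝ) v)
    (hgu : ⟪gradient f u, p⟫ ≤ 0) :
    ∃ c : ℝ, 0 < c ∧ c < 1 ∧
      c * |⟪gradient f x, p⟫| = |⟪gradient f u, p⟫| ∧
      f u ≤ f x + c * w * ⟪gradient f x, p⟫ := by
  obtain ⟨hw0, hwv⟩ := hwmem
  set a : ℝ := ⟪gradient f x, p⟫ with ha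
  set b : ℝ := ⟪gradient f u, p⟫ with hb
  have hbneg : b < 0 := by
    by_contra h
    push_neg at h
    have : w ≤ 0 := by
      rw [hw]
      nlinarith
    linarith
  have hdiff : Differentiable ℝ f := hf.differentiable one_ne_zero
  -- derivative of g s = f (x + s • p)
  have hderiv : ∀ s : ℝ, HasDerivAt (fun s : ℝ => f (x + s • p))
      ⟪gradient f (x + s • p), p⟫ s := by
    intro s
    have h1 : HasDerivAt (fun s : ℝ => x + s • p) p s := by
      simpa using ((hasDerivAt_id s).smul_const p).const_add x
    have h2 : HasFDerivAt f (fderiv ℝ f (x + s • p)) (x + s • p) :=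
      (hdiff (x + s • p)).hasFDerivAt
    have h3 := h2.comp_hasDerivAt s h1
    have h4 : ⟪gradient f (x + s • p), p⟫ = fderiv ℝ f (x + s • p) p := by
      simp [gradient, InnerProductSpace.toDual_symm_apply]
    rw [h4]
    exact h3
  have hd0 : HasDerivAt (fun s : ℝ => f (x + s • p)) a 0 := by
    have := hderiv 0
    simpa [ha] using this
  have hdw : HasDerivAt (fun s : ℝ => f (x + s • p)) b w := by
    have := hderiv w
    rw [hu] at hb
    simpa [hb] using this
  have h0mem : (0:ℝ) ∈ Set.Icc (0:ℝ) v := ⟨le_rfl, le_of_lt hv⟩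
  have hwm : w ∈ Set.Icc (0:ℝ) v := ⟨le_of_lt hw0, hwv⟩
  have hlt1 : a < slope (fun s : ℝ => f (x + s • p)) 0 w :=
    hconv.lt_slope_of_hasDerivAt h0mem hwm hw0 hd0
  have hlt2 : slope (fun s : ℝ => f (x + s • p)) 0 w < b :=
    hconv.slope_lt_of_hasDerivAt h0mem hwm hw0 hdw
  have hab : a < b := lt_trans hlt1 hlt2
  have hane : a ≠ 0 := ne_of_lt hdesc
  refine ⟨b / a, ?_, ?_, ?_, ?_⟩
  · exact div_pos_iff.mpr (Or.inr ⟨hbneg, hdesc⟩)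
  · rw [div_lt_iff_of_neg hdesc]
    linarith
  · rw [abs_of_neg hdesc, abs_of_neg hbneg]
    field_simp
  · have hca : b / a * a = b := div_mul_cancel₀ b hane
    have : f u - f x ≤ w * b := by
      have hs : slope (fun s : ℝ => f (x + s • p)) 0 w
          = (f u - f x) / w := by
        simp [slope, hu, div_eq_inv_mul]
      rw [hs] at hlt2
      have := (div_le_iff₀ hw0).mp (le_of_lt hlt2)
      linarith [this]
    calc f u ≤ f x + w * b := by linarith
      _ = f x + b / a * w * a := by rw [mul_comm (b/a) w, mul_assoc, hca]
end

section
/- Let D ⊆ ℝⁿ be a convex set, let f : ℝⁿ → ℝ be continuously differentiable and convex on D, let x* ∈ D satisfy ∇f(x*) = 0 with f* = f(x*), let x ∈ D with x ≠ x*, let p̄ be a unit vector, let t > 0, and let u = x − t·⟨∇f(u), p̄⟩·p̄ ∈ D with step-size w = −t·⟨∇f(u), p̄⟩ ≥ 0. Suppose ∇f(u) ≠ 0 and, writing p̄* = (x* − x)/‖x* − x‖ and v for the orthogonal projection of p̄* onto the linear span of {p̄, ∇f(u)}, suppose ∇f(u)/‖∇f(u)‖ = α·p̄ + β·v with β ≥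 0. Then 2t·(f(u) − f*) + w² ≤ ‖x − x*‖² − ‖u − x*‖²; in particular ‖u − x*‖ ≤ ‖x − x*‖. -/
open scoped RealInnerProductSpace

lemma grad_convex_ineq {n : ℕ} {D : Set (EuclideanSpace ℝ (Fin n))}
    {f : EuclideanSpace ℝ (Fin n) → ℝ} (hf : ContDiff ℝ 1 f)
    (hfconv : ConvexOn ℝ D f) {a b : EuclideanSpace ℝ (Fin n)}
    (ha : a ∈ D) (hb : b ∈ D) :
    f a + ⟪gradient f a, b - a⟫ ≤ f b := by
  have hdiff : DifferentiableAt ℝ f a := (hf.differentiable one_ne_zero).differentiableAt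
  have hgrad := hasGradientAt_iff_hasFDerivAt.mp hdiff.hasGradientAt
  set L := AffineMap.lineMap (k := ℝ) a b with hL
  have h0 : L 0 = a := AffineMap.lineMap_apply_zero a b
  have h1v : L 1 = b := AffineMap.lineMap_apply_one a b
  have hderiv : HasDerivAt (f ∘ L) ⟪gradient f a, b - a⟫ 0 := by
    have h1 : HasDerivAt L (b - a) 0 := AffineMap.hasDerivAt_lineMap
    have h2 := HasFDerivAt.comp_hasDerivAt 0 (show HasFDerivAt f _ (L 0) from h0.symm ▸ hgrad) h1
    simpa [h0] using h2
  have hconv : ConvexOn ℝ (L ⁻¹' D) (f ∘ L) := hfconv.comp_affineMap L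
  have hsl := hconv.le_slope_of_hasDerivAt (x := (0:ℝ)) (y := 1)
    (by simp [Set.mem_preimage, h0, ha]) (by simp [Set.mem_preimage, h1v, hb])
    one_pos hderiv
  have : slope (f ∘ L) 0 1 = f b - f a := by
    simp [slope, h0, h1v]
  rw [this] at hsl
  linarith

lemma key_aux (G V a α β : ℝ) (hG : 0 ≤ G) (hβ : 0 ≤ β) (hcs : a ^ 2 ≤ V ^ 2) :
    G * (α + β * a) * a ≤ G * (α * a + β * V ^ 2) := by
  nlinarith [mul_nonneg (mul_nonneg hG hβ) (sub_nonneg.mpr hcs)]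

/-- Fejér-type inequality for a DPPM update inside a convex region on
which `f` is convex (Corollary `dppmfejer`(i) of the paper). -/
theorem dppm_fejer_inequality {n : ℕ}
    (D : Set (EuclideanSpace ℝ (Fin n))) (hD : Convex ℝ D)
    (f : EuclideanSpace ℝ (Fin n) → ℝ) (hf : ContDiff ℝ 1 f)
    (hfconv : ConvexOn ℝ D f)
    (xs : EuclideanSpace ℝ (Fin n)) (hxs : xs ∈ D)
    (hcrit : gradient f xs = 0)
    (fstar : ℝ) (hfstar : fstar = f xs)
    (x : EuclideanSpace ℝ (Fin n)) (hx : x ∈ D) (hxne : x ≠ xs)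
    (p : EuclideanSpace ℝ (Fin n)) (hp : ‖p‖ = 1)
    (t : ℝ) (ht : 0 < t)
    (u : EuclideanSpace ℝ (Fin n))
    (hu : u = x - (t * ⟪gradient f u, p⟫) • p) (huD : u ∈ D)
    (w : ℝ) (hw : w = -(t * ⟪gradient f u, p⟫)) (hwnn : 0 ≤ w)
    (hgu : gradient f u ≠ 0)
    (ps : EuclideanSpace ℝ (Fin n)) (hps : ps = ‖xs - x‖⁻¹ • (xs - x))
    (v : EuclideanSpace ℝ (Fin n))
    (hvmem : v ∈ Submodule.span ℝ {p, gradient f u})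
    (hvperp : ps - v ∈ (Submodule.span ℝ {p, gradient f u})ᗮ)
    (α β : ℝ) (hβ : 0 ≤ β)
    (hdecomp : ‖gradient f u‖⁻¹ • gradient f u = α • p + β • v) :
    2 * t * (f u - fstar) + w ^ 2 ≤ ‖x - xs‖ ^ 2 - ‖u - xs‖ ^ 2 ∧
    ‖u - xs‖ ≤ ‖x - xs‖ := by
  set g := gradient f u with hg
  have hR : (0:ℝ) < ‖xs - x‖ := by
    rw [norm_pos_iff]
    exact sub_ne_zero.mpr (Ne.symm hxne)
  set R := ‖xs - x‖ with hRdef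
  clear_value g R
  have hgnorm : (0:ℝ) < ‖g‖ := norm_pos_iff.mpr hgu
  -- u - x = w • p
  have hux : u - x = w • p := by rw [hw, hu]; module
  -- R • ps = xs - x
  have hRps : R • ps = xs - x := by
    rw [hps, smul_smul, mul_inv_cancel₀ hR.ne', one_smul]
  have huxs : u - xs = w • p - R • ps := by
    rw [hRps, ← hux]; abel
  -- orthogonality facts
  have hgspan : g ∈ Submodule.span ℝ {p, g} :=
    Submodule.subset_span (by simp)
  have hpspan : p ∈ Submodule.span ℝ {p, g} :=
    Submodule.subset_span (by simp)
  have hperpg : ⟪g, ps⟫ = ⟪g, v⟫ := by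
    have := (Submodule.mem_orthogonal _ _).mp hvperp g hgspan
    rw [inner_sub_right] at this; linarith
  have hperpp : ⟪p, ps⟫ = ⟪p, v⟫ := by
    have := (Submodule.mem_orthogonal _ _).mp hvperp p hpspan
    rw [inner_sub_right] at this; linarith
  -- decomposition of g
  have hgeq : g = ‖g‖ • (α • p + β • v) := by
    rw [← hdecomp, smul_smul, mul_inv_cancel₀ hgnorm.ne', one_smul]
  have hpp : ⟪p, p⟫ = 1 := by
    rw [real_inner_self_eq_norm_mul_norm, hp]; ring
  have e1 : ⟪g, p⟫ = ‖g‖ * (α + β * ⟪p, v⟫) := by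
    conv_lhs => rw [hgeq]
    rw [real_inner_smul_left, inner_add_left, real_inner_smul_left, real_inner_smul_left,
      hpp, real_inner_comm v p]
    ring
  have e2 : ⟪g, v⟫ = ‖g‖ * (α * ⟪p, v⟫ + β * ‖v‖ ^ 2) := by
    conv_lhs => rw [hgeq]
    rw [real_inner_smul_left, inner_add_left, real_inner_smul_left, real_inner_smul_left,
      real_inner_self_eq_norm_sq]
    try ring
  have hcs : ⟪p, v⟫ ^ 2 ≤ ‖v‖ ^ 2 := by
    have h := abs_real_inner_le_norm p v
    rw [hp, one_mul] at h
    nlinarith [abs_nonneg ⟪p, v⟫, sq_abs ⟪p, v⟫]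
  have key : ⟪g, p⟫ * ⟪p, v⟫ ≤ ⟪g, v⟫ := by
    rw [e1, e2]
    exact key_aux ‖g‖ ‖v‖ ⟪p, v⟫ α β hgnorm.le hβ hcs
  -- gradient inequalities from convexity
  have hgradineq : f u - f xs ≤ ⟪g, u - xs⟫ := by
    have h := grad_convex_ineq hf hfconv huD hxs
    have : ⟪g, xs - u⟫ = -⟪g, u - xs⟫ := by
      rw [← neg_sub, inner_neg_right]
    rw [← hg] at h
    linarith [h, this.symm ▸ h]
  have hmin : f xs ≤ f u := by
    have h := grad_convex_ineq hf hfconv hxs huD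
    rw [hcrit, inner_zero_left] at h
    linarith
  -- inner product expansions
  have hinner_g : ⟪g, u - xs⟫ = w * ⟪g, p⟫ - R * ⟪g, ps⟫ := by
    rw [huxs, inner_sub_right, real_inner_smul_right, real_inner_smul_right]
  have hinner_p : ⟪p, u - xs⟫ = w - R * ⟪p, ps⟫ := by
    rw [huxs, inner_sub_right, real_inner_smul_right, real_inner_smul_right, hpp]
    ring
  -- key directional bound
  have h2 : f u - f xs ≤ ⟪g, p⟫ * ⟪p, u - xs⟫ := by
    have hkey' : ⟪g, p⟫ * ⟪p, ps⟫ ≤ ⟪g, ps⟫ := by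
      rw [hperpg, hperpp]; exact key
    have := mul_le_mul_of_nonneg_left hkey' hR.le
    rw [hinner_p]
    calc f u - f xs ≤ ⟪g, u - xs⟫ := hgradineq
      _ = w * ⟪g, p⟫ - R * ⟪g, ps⟫ := hinner_g
      _ ≤ w * ⟪g, p⟫ - R * (⟪g, p⟫ * ⟪p, ps⟫) := by linarith
      _ = ⟪g, p⟫ * (w - R * ⟪p, ps⟫) := by ring
  -- norm identity
  have hxid : ‖x - xs‖ ^ 2 = ‖u - xs‖ ^ 2 - 2 * w * ⟪u - xs, p⟫ + w ^ 2 := by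
    have hx2 : x - xs = (u - xs) - w • p := by rw [← hux]; abel
    rw [hx2, norm_sub_sq_real, real_inner_smul_right, norm_smul, hp]
    rw [Real.norm_eq_abs, abs_of_nonneg hwnn]
    ring
  have hsym : ⟪u - xs, p⟫ = ⟪p, u - xs⟫ := real_inner_comm _ _
  have hwgp : w = -(t * ⟪g, p⟫) := hw
  have main : 2 * t * (f u - fstar) + w ^ 2 ≤ ‖x - xs‖ ^ 2 - ‖u - xs‖ ^ 2 := by
    rw [hfstar, hxid, hsym]
    have h3 := mul_le_mul_of_nonneg_left h2 (by positivity : (0:ℝ) ≤ 2 * t)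
    have hwe : -(2 * w * ⟪p, u - xs⟫) = 2 * t * (⟪g, p⟫ * ⟪p, u - xs⟫) := by
      rw [hwgp]; ring
    linarith [h3, hwe]
  refine ⟨main, ?_⟩
  have hfu : f xs ≤ f u := hmin
  have hsq : ‖u - xs‖ ^ 2 ≤ ‖x - xs‖ ^ 2 := by
    have h4 : (0:ℝ) ≤ 2 * t * (f u - fstar) + w ^ 2 := by
      rw [hfstar]
      have h5 := mul_nonneg (by positivity : (0:ℝ) ≤ 2 * t) (sub_nonneg.mpr hfu)
      linarith [sq_nonneg w]
    linarith
  exact (pow_le_pow_iff_left₀ (norm_nonneg _) (norm_nonneg _) two_ne_zero).mp hsq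
end

section
/- Let t > 0, let θₖ = 2/(k+1) for k ≥ 1, and let {aₖ}_{k≥0} and {bₖ}_{k≥0} be sequences of nonnegative real numbers satisfying, for every k ≥ 1, (1/θₖ²)·aₖ + bₖ ≤ ((1 − θₖ)/θₖ²)·aₖ₋₁ + bₖ₋₁. Then for every k ≥ 1, aₖ ≤ θₖ²·b₀ = 4·b₀/(k+1)². In particular, for the accelerated DPPM where aₖ = f(xᵏ) − f* and bₖ = (1/t)·‖vᵏ − x*‖² with v⁰ = x⁰, one obtains f(xᵏ) − f* ≤ (4/(t·(k+1)²))·‖x⁰ − x*‖², so an ε-suboptimal value is reached in O(1/√ε) iterations. -/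
/-- the Nesterov-type recursion yields an O(1/k²) rate, hence the
accelerated DPPM reaches an ε-suboptimal value in O(1/√ε) iterations. -/
theorem dppm_accelerated_rate {n : ℕ} (t : ℝ) (ht : 0 < t)
    (θ : ℕ → ℝ) (hθ : ∀ k : ℕ, θ k = 2 / (k + 1))
    (a b : ℕ → ℝ) (ha : ∀ k, 0 ≤ a k) (hb : ∀ k, 0 ≤ b k)
    (hrec : ∀ k : ℕ, 1 ≤ k →
      (1 / (θ k) ^ 2) * a k + b k ≤ ((1 - θ k) / (θ k) ^ 2) * a (k - 1) + b (k - 1)) :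
    (∀ k : ℕ, 1 ≤ k → a k ≤ (θ k) ^ 2 * b 0 ∧ (θ k) ^ 2 * b 0 = 4 * b 0 / (k + 1) ^ 2) ∧
    (∀ (f : EuclideanSpace ℝ (Fin n) → ℝ) (fstar : ℝ)
        (x v : ℕ → EuclideanSpace ℝ (Fin n)) (xs : EuclideanSpace ℝ (Fin n)),
      v 0 = x 0 →
      (∀ k, a k = f (x k) - fstar) →
      (∀ k, b k = (1 / t) * ‖v k - xs‖ ^ 2) →
      ∀ k : ℕ, 1 ≤ k →
        f (x k) - fstar ≤ (4 / (t * (k + 1) ^ 2)) * ‖x 0 - xs‖ ^ 2) := by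
  have hθpos : ∀ k : ℕ, 0 < θ k := by
    intro k
    rw [hθ k]
    positivity
  -- key invariant
  have key : ∀ k : ℕ, 1 ≤ k → (1 / (θ k) ^ 2) * a k + b k ≤ b 0 := by
    intro k hk
    induction k with
    | zero => omega
    | succ m ih =>
      rcases Nat.eq_or_lt_of_le hk with h1 | h1
      · -- m + 1 = 1, i.e. k = 1
        have hm : m = 0 := by omega
        subst hm
        have h := hrec 1 le_rfl
        simp only [hθ] at h ⊢
        norm_num at h ⊢
        linarith
      · -- m ≥ 1
        have hm : 1 ≤ m := by omega
        have ihm := ih hm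
        have h := hrec (m + 1) (by omega)
        have hsub : (m + 1) - 1 = m := by omega
        rw [hsub] at h
        have hcoef : ((1 - θ (m + 1)) / (θ (m + 1)) ^ 2) ≤ 1 / (θ m) ^ 2 := by
          rw [hθ, hθ]
          push_cast
          have hm2 : (0:ℝ) < (m:ℝ) + 2 := by positivity
          have hm1 : (0:ℝ) < (m:ℝ) + 1 := by positivity
          have e1 : (1 - 2 / ((m:ℝ) + 1 + 1)) / (2 / ((m:ℝ) + 1 + 1)) ^ 2
              = (m:ℝ) * ((m:ℝ) + 2) / 4 := by
            field_simp
            ring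
          have e2 : 1 / (2 / ((m:ℝ) + 1)) ^ 2 = ((m:ℝ) + 1) ^ 2 / 4 := by
            field_simp
            norm_num
          rw [e1, e2]
          nlinarith [sq_nonneg ((m:ℝ))]
        have hA : ((1 - θ (m + 1)) / (θ (m + 1)) ^ 2) * a m ≤ (1 / (θ m) ^ 2) * a m :=
          mul_le_mul_of_nonneg_right hcoef (ha m)
        calc (1 / (θ (m + 1)) ^ 2) * a (m + 1) + b (m + 1)
            ≤ ((1 - θ (m + 1)) / (θ (m + 1)) ^ 2) * a m + b m := h
          _ ≤ (1 / (θ m) ^ 2) * a m + b m := by linarith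
          _ ≤ b 0 := ihm
  have main : ∀ k : ℕ, 1 ≤ k → a k ≤ (θ k) ^ 2 * b 0 ∧
      (θ k) ^ 2 * b 0 = 4 * b 0 / (k + 1) ^ 2 := by
    intro k hk
    have hk0 := key k hk
    have hθk := hθpos k
    constructor
    · have h1 : (1 / (θ k) ^ 2) * a k ≤ b 0 := by
        have := hb k; linarith
      have h2 : a k = (θ k) ^ 2 * ((1 / (θ k) ^ 2) * a k) := by
        field_simp
      rw [h2]
      exact mul_le_mul_of_nonneg_left h1 (by positivity)
    · rw [hθ k]
      have : ((k:ℝ) + 1) ≠ 0 := by positivity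
      field_simp
      norm_num
      ring
  refine ⟨main, ?_⟩
  intro f fstar x v xs hv0 haf hbv k hk
  have ⟨h1, h2⟩ := main k hk
  have hb0 : b 0 = (1 / t) * ‖x 0 - xs‖ ^ 2 := by rw [hbv 0, hv0]
  have := haf k
  rw [this] at h1
  rw [h2, hb0] at h1
  have heq : 4 * ((1 / t) * ‖x 0 - xs‖ ^ 2) / (k + 1) ^ 2
      = (4 / (t * (k + 1) ^ 2)) * ‖x 0 - xs‖ ^ 2 := by
    field_simp
  linarith [heq ▸ h1]
end

section
/- Let Q ∈ ℝ^{n×n} be a symmetric positive definite matrix with smallest eigenvalue m > 0, and let p̄₀, …, p̄_{n−1} be Q-conjugate unit vectors (‖p̄ᵢ‖ = 1 and p̄ᵢᵀQp̄ⱼ = 0 for i ≠ j). Let λ > 0, let x⁰ = Σ_{i=0}^{n−1} bᵢ·p̄ᵢ, and define x^{j+1} = (I + λ·p̄ⱼp̄ⱼᵀQ)⁻¹·xʲ for j = 0, …, n−1. Then xⁿ = Σ_{i=0}^{n−1} (bᵢ/(1 + λ·p̄ᵢᵀQp̄ᵢ))·p̄ᵢ, and consequently ‖xⁿ‖_Q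 ≤ (1/(1 + λm))·‖x⁰‖_Q, where ‖y‖_Q = √(yᵀQy). -/
open Matrix
variable {n : ℕ}

lemma aux_vecMulVec_mulVec (u v w : Fin n → ℝ) :
    (vecMulVec u v) *ᵥ w = (v ⬝ᵥ w) • u := by
  ext i
  simp only [Matrix.mulVec, dotProduct, vecMulVec_apply, Pi.smul_apply, smul_eq_mul,
    Finset.sum_mul]
  exact Finset.sum_congr rfl fun l _ => by ring

lemma aux_vecMulVec_mul (Q : Matrix (Fin n) (Fin n) ℝ) (u v : Fin n → ℝ) :
    vecMulVec u v * Q = vecMulVec u (v ᵥ* Q) := by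
  ext i k
  simp only [Matrix.mul_apply, vecMulVec_apply, Matrix.vecMul, dotProduct, Finset.mul_sum]
  exact Finset.sum_congr rfl fun l _ => by ring

lemma aux_vecMulVec_mul_vecMulVec (u v u' v' : Fin n → ℝ) :
    vecMulVec u v * vecMulVec u' v' = (v ⬝ᵥ u') • vecMulVec u v' := by
  ext i k
  simp only [Matrix.mul_apply, vecMulVec_apply, Matrix.smul_apply, dotProduct, smul_eq_mul,
    Finset.sum_mul]
  exact Finset.sum_congr rfl fun l _ => by ring

lemma aux_M_sq (Q : Matrix (Fin n) (Fin n) ℝ) (u : Fin n → ℝ) :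
    (vecMulVec u u * Q) * (vecMulVec u u * Q) = (u ⬝ᵥ Q *ᵥ u) • (vecMulVec u u * Q) := by
  rw [aux_vecMulVec_mul, aux_vecMulVec_mul_vecMulVec, ← Matrix.dotProduct_mulVec]

lemma aux_inv (Q : Matrix (Fin n) (Fin n) ℝ) (u : Fin n → ℝ) (lam : ℝ)
    (hden : 0 < 1 + lam * (u ⬝ᵥ Q *ᵥ u)) :
    (1 + lam • (vecMulVec u u * Q))⁻¹
      = 1 - (lam / (1 + lam * (u ⬝ᵥ Q *ᵥ u))) • (vecMulVec u u * Q) := by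
  set d := u ⬝ᵥ Q *ᵥ u with hd
  set M := vecMulVec u u * Q with hMdef
  set c := lam / (1 + lam * d) with hc
  apply Matrix.inv_eq_right_inv
  have hM : M * M = d • M := aux_M_sq Q u
  have hc0 : lam - c - lam * c * d = 0 := by
    rw [hc]; field_simp; ring
  calc (1 + lam • M) * (1 - c • M)
      = 1 + (lam - c - lam * c * d) • M := by
        simp only [mul_sub, add_mul, one_mul, mul_one, Matrix.smul_mul, Matrix.mul_smul, hM,
          smul_smul]
        module
    _ = 1 := by rw [hc0, zero_smul, add_zero]

/-- one full cycle of DPPM updates along Q-conjugate unit directions for a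
strongly convex quadratic contracts the Q-norm by a factor `1/(1+λm)`. -/
theorem dppm_conjugate_cycle_contraction {n : ℕ}
    (Q : Matrix (Fin n) (Fin n) ℝ) (hQsymm : Q.IsSymm) (hQpd : Q.PosDef)
    (m : ℝ) (hm : 0 < m)
    (hmeig : ∃ y : Fin n → ℝ, y ≠ 0 ∧ Q.mulVec y = m • y)
    (hmlb : ∀ y : Fin n → ℝ, m * (y ⬝ᵥ y) ≤ y ⬝ᵥ Q.mulVec y)
    (p : Fin n → (Fin n → ℝ))
    (hpunit : ∀ i, p i ⬝ᵥ p i = 1)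
    (hpconj : ∀ i j, i ≠ j → p i ⬝ᵥ Q.mulVec (p j) = 0)
    (hpli : LinearIndependent ℝ p)
    (lam : ℝ) (hlam : 0 < lam)
    (b : Fin n → ℝ)
    (x : ℕ → (Fin n → ℝ))
    (hx0 : x 0 = ∑ i : Fin n, b i • p i)
    (hupd : ∀ j : Fin n,
      x ((j : ℕ) + 1) = (1 + lam • (vecMulVec (p j) (p j) * Q))⁻¹.mulVec (x (j : ℕ))) :
    x n = ∑ i : Fin n, (b i / (1 + lam * (p i ⬝ᵥ Q.mulVec (p i)))) • p i ∧
    Real.sqrt (x n ⬝ᵥ Q.mulVec (x n)) ≤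
      (1 / (1 + lam * m)) * Real.sqrt (x 0 ⬝ᵥ Q.mulVec (x 0)) := by
  set d : Fin n → ℝ := fun i => p i ⬝ᵥ Q.mulVec (p i) with hd
  have hdm : ∀ i, m ≤ d i := fun i => by
    have := hmlb (p i); rwa [hpunit i, mul_one] at this
  have hdpos : ∀ i, 0 < d i := fun i => lt_of_lt_of_le hm (hdm i)
  have hden : ∀ i, 0 < 1 + lam * d i := fun i => by
    have := mul_pos hlam (hdpos i); linarith
  have h1m : 0 < 1 + lam * m := by have := mul_pos hlam hm; linarith
  -- action of the inverse matrix on each conjugate direction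
  have hstep : ∀ (j i : Fin n),
      (1 + lam • (vecMulVec (p j) (p j) * Q))⁻¹ *ᵥ p i
        = (if i = j then 1 / (1 + lam * d j) else 1) • p i := by
    intro j i
    rw [aux_inv Q (p j) lam (hden j), Matrix.sub_mulVec, Matrix.one_mulVec,
      Matrix.smul_mulVec, ← Matrix.mulVec_mulVec, aux_vecMulVec_mulVec]
    by_cases h : i = j
    · subst h
      have : (p i ⬝ᵥ Q *ᵥ p i) = d i := rfl
      rw [this, if_pos rfl, smul_smul]
      have hne : (1 + lam * d i) ≠ 0 := ne_of_gt (hden i)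
      rw [show p i - (lam / (1 + lam * d i) * d i) • p i
          = (1 - lam / (1 + lam * d i) * d i) • p i from by
        rw [sub_smul, one_smul]]
      congr 1
      field_simp
      ring
    · rw [hpconj j i (fun hji => h hji.symm), zero_smul, smul_zero, sub_zero, if_neg h, one_smul]
  -- induction along the cycle
  have hxj : ∀ j : ℕ, j ≤ n →
      x j = ∑ i : Fin n, (if (i : ℕ) < j then b i / (1 + lam * d i) else b i) • p i := by
    intro j
    induction j with
    | zero => intro _; simpa using hx0
    | succ j ih =>
      intro hj
      have hj' : j < n := hj
      have hJ : ((⟨j, hj'⟩ : Fin n) : ℕ) = j := rfl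
      have := hupd ⟨j, hj'⟩
      rw [hJ] at this
      rw [this, ih (le_of_lt hj')]
      rw [show ∀ v : Fin n → ℝ, (1 + lam • (vecMulVec (p ⟨j, hj'⟩) (p ⟨j, hj'⟩) * Q))⁻¹.mulVec v
          = (1 + lam • (vecMulVec (p ⟨j, hj'⟩) (p ⟨j, hj'⟩) * Q))⁻¹.mulVecLin v
          from fun v => rfl]
      rw [map_sum]
      refine Finset.sum_congr rfl fun i _ => ?_
      rw [LinearMap.map_smul, Matrix.mulVecLin_apply, hstep ⟨j, hj'⟩ i, smul_smul]
      by_cases h1 : (i : ℕ) < j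
      · have hne : i ≠ ⟨j, hj'⟩ := fun h => by simp [h] at h1
        rw [if_neg hne, if_pos h1, if_pos (Nat.lt_succ_of_lt h1), mul_one]
      · by_cases h2 : i = ⟨j, hj'⟩
        · rw [if_pos h2, if_neg h1, if_pos (by rw [h2]; exact Nat.lt_succ_self j)]
          subst h2
          rw [mul_one_div]
        · have h3 : ¬ (i : ℕ) < j + 1 := by
            intro hlt
            exact h2 (Fin.ext (by omega))
          rw [if_neg h2, if_neg h1, if_neg h3, mul_one]
  have hxn : x n = ∑ i : Fin n, (b i / (1 + lam * d i)) • p i := by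
    rw [hxj n le_rfl]
    exact Finset.sum_congr rfl fun i _ => by rw [if_pos i.isLt]
  refine ⟨hxn, ?_⟩
  -- quadratic form of a conjugate expansion
  have quad : ∀ c : Fin n → ℝ,
      (∑ i : Fin n, c i • p i) ⬝ᵥ Q.mulVec (∑ i : Fin n, c i • p i)
        = ∑ i : Fin n, (c i) ^ 2 * d i := by
    intro c
    have hQv : Q.mulVec (∑ i : Fin n, c i • p i) = ∑ i : Fin n, c i • Q.mulVec (p i) := by
      ext k
      simp only [Matrix.mulVec, dotProduct, Finset.sum_apply, Pi.smul_apply, smul_eq_mul,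
        Finset.mul_sum]
      rw [Finset.sum_comm]
      exact Finset.sum_congr rfl fun l _ => Finset.sum_congr rfl fun i _ => by ring
    have hdot : ∀ w : Fin n → ℝ, (∑ i : Fin n, c i • p i) ⬝ᵥ w
        = ∑ i : Fin n, c i * (p i ⬝ᵥ w) := by
      intro w
      simp only [dotProduct, Finset.sum_apply, Pi.smul_apply, smul_eq_mul, Finset.sum_mul,
        Finset.mul_sum]
      rw [Finset.sum_comm]
      exact Finset.sum_congr rfl fun i _ => Finset.sum_congr rfl fun k _ => by ring
    have hdot2 : ∀ v : Fin n → ℝ, ∀ ws : Fin n → (Fin n → ℝ),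
        v ⬝ᵥ (∑ j : Fin n, c j • ws j) = ∑ j : Fin n, c j * (v ⬝ᵥ ws j) := by
      intro v ws
      simp only [dotProduct, Finset.sum_apply, Pi.smul_apply, smul_eq_mul, Finset.mul_sum]
      rw [Finset.sum_comm]
      exact Finset.sum_congr rfl fun i _ => Finset.sum_congr rfl fun k _ => by ring
    rw [hQv, hdot]
    refine Finset.sum_congr rfl fun i _ => ?_
    rw [hdot2]
    rw [Finset.sum_eq_single i ?h1 ?h2]
    · ring
    · intro j _ hji
      rw [hpconj i j hji.symm]
      simp
    · intro h; exact absurd (Finset.mem_univ i) h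
  have hxnq : x n ⬝ᵥ Q.mulVec (x n) = ∑ i : Fin n, (b i / (1 + lam * d i)) ^ 2 * d i := by
    rw [hxn]; exact quad _
  have hx0q : x 0 ⬝ᵥ Q.mulVec (x 0) = ∑ i : Fin n, (b i) ^ 2 * d i := by
    rw [hx0]; exact quad _
  have hle : x n ⬝ᵥ Q.mulVec (x n) ≤ (1 / (1 + lam * m)) ^ 2 * (x 0 ⬝ᵥ Q.mulVec (x 0)) := by
    rw [hxnq, hx0q, Finset.mul_sum]
    refine Finset.sum_le_sum fun i _ => ?_
    have h1 : 1 + lam * m ≤ 1 + lam * d i := by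
      have := mul_le_mul_of_nonneg_left (hdm i) (le_of_lt hlam); linarith
    calc (b i / (1 + lam * d i)) ^ 2 * d i
        = (b i ^ 2 / (1 + lam * d i) ^ 2) * d i := by rw [div_pow]
      _ ≤ (b i ^ 2 / (1 + lam * m) ^ 2) * d i := by
          apply mul_le_mul_of_nonneg_right _ (le_of_lt (hdpos i))
          gcongr
      _ = 1 / (1 + lam * m) ^ 2 * (b i ^ 2 * d i) := by ring
      _ = (1 / (1 + lam * m)) ^ 2 * (b i ^ 2 * d i) := by rw [div_pow, one_pow]
  calc Real.sqrt (x n ⬝ᵥ Q.mulVec (x n))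
      ≤ Real.sqrt ((1 / (1 + lam * m)) ^ 2 * (x 0 ⬝ᵥ Q.mulVec (x 0))) := Real.sqrt_le_sqrt hle
    _ = (1 / (1 + lam * m)) * Real.sqrt (x 0 ⬝ᵥ Q.mulVec (x 0)) := by
        rw [Real.sqrt_mul (sq_nonneg _), Real.sqrt_sq (by positivity)]
end

section
/- Let f(x) = ½xᵀQx with Q ∈ ℝ^{n×n} symmetric positive definite with smallest eigenvalue m > 0, and let {xᵏ} be the DPPM iterates with constant parameter λ > 0 and search directions cycling through a Q-conjugate unit-vector basis (so that x^{k+1} = (I + λ·p̄ₖp̄ₖᵀQ)⁻¹·xᵏ with p̄_{ln+i} = ±ḡ_i for a fixed Q-conjugate basis ḡ₁, …, ḡ_n). Then ‖x^{kn}‖_Q ≤ (1/(1 + λm))ᵏ·‖x⁰‖_Q for all k ≥ 0, the sequence {‖xᵏ‖_Q} is monotone nonincreasing and converges to 0, hence {xᵏ} converges to the optimal point x* = 0, and the convergence rate of the error sequence εₖ = ‖xᵏ‖_Q is R-linear with rate (1/(1 + λm))^{1/n}. -/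
open Matrix Filter Topology

/-- R-linear convergence of the DPPM with constant parameter and cyclic
Q-conjugate search directions for a strongly convex quadratic
(Proposition 2(i) of the paper). -/
theorem dppm_quadratic_R_linear {n : ℕ} (hn : 0 < n)
    (Q : Matrix (Fin n) (Fin n) ℝ) (hQsymm : Q.IsSymm) (hQpd : Q.PosDef)
    (m : ℝ) (hm : 0 < m)
    (hmeig : ∃ y : Fin n → ℝ, y ≠ 0 ∧ Q.mulVec y = m • y)
    (hmlb : ∀ y : Fin n → ℝ, m * (y ⬝ᵥ y) ≤ y ⬝ᵥ Q.mulVec y)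
    (g : Fin n → (Fin n → ℝ))
    (hgunit : ∀ i, g i ⬝ᵥ g i = 1)
    (hgconj : ∀ i j, i ≠ j → g i ⬝ᵥ Q.mulVec (g j) = 0)
    (hgli : LinearIndependent ℝ g)
    (lam : ℝ) (hlam : 0 < lam)
    (p : ℕ → (Fin n → ℝ))
    (hp : ∀ k : ℕ, p k = g ⟨k % n, Nat.mod_lt k hn⟩ ∨ p k = -g ⟨k % n, Nat.mod_lt k hn⟩)
    (x : ℕ → (Fin n → ℝ))
    (hupd : ∀ k : ℕ, x (k + 1) = (1 + lam • (vecMulVec (p k) (p k) * Q))⁻¹.mulVec (x k)) :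
    (∀ k : ℕ, Real.sqrt (x (k * n) ⬝ᵥ Q.mulVec (x (k * n))) ≤
        (1 / (1 + lam * m)) ^ k * Real.sqrt (x 0 ⬝ᵥ Q.mulVec (x 0))) ∧
    (Antitone fun k : ℕ => Real.sqrt (x k ⬝ᵥ Q.mulVec (x k))) ∧
    Tendsto (fun k : ℕ => Real.sqrt (x k ⬝ᵥ Q.mulVec (x k))) atTop (𝓝 0) ∧
    Tendsto x atTop (𝓝 0) ∧
    (∃ C : ℝ, 0 < C ∧ ∀ k : ℕ,
      Real.sqrt (x k ⬝ᵥ Q.mulVec (x k)) ≤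
        C * ((1 / (1 + lam * m)) ^ ((n : ℝ)⁻¹)) ^ k) := by
  classical
  have hne : Nonempty (Fin n) := ⟨⟨0, hn⟩⟩
  -- basic vector algebra facts
  have hvmv : ∀ u v w : Fin n → ℝ, (vecMulVec u v) *ᵥ w = (v ⬝ᵥ w) • u := by
    intro u v w
    ext i
    simp only [mulVec, vecMulVec_apply, dotProduct, Pi.smul_apply, smul_eq_mul, Finset.sum_mul]
    exact Finset.sum_congr rfl fun a _ => by ring
  have hsumdot : ∀ (c : Fin n → ℝ) (u : Fin n → ℝ),
      (∑ i, c i • g i) ⬝ᵥ u = ∑ i, c i * (g i ⬝ᵥ u) := by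
    intro c u
    simp [dotProduct, Finset.sum_mul, Finset.mul_sum, mul_assoc]
    rw [Finset.sum_comm]
  have hsymmdot : ∀ u v : Fin n → ℝ, u ⬝ᵥ Q.mulVec v = v ⬝ᵥ Q.mulVec u := by
    intro u v
    rw [dotProduct_mulVec, dotProduct_comm, ← mulVec_transpose, hQsymm.eq]
  -- quantities
  set q : Fin n → ℝ := fun i => g i ⬝ᵥ Q.mulVec (g i) with hqdef
  have hqm : ∀ i, m ≤ q i := by
    intro i
    have := hmlb (g i)
    rwa [hgunit i, mul_one] at this
  have hqpos : ∀ i, 0 < q i := fun i => lt_of_lt_of_le hm (hqm i)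
  have hlm : (0:ℝ) < 1 + lam * m := by positivity
  set ρ : ℝ := 1 / (1 + lam * m) with hρdef
  have hρpos : 0 < ρ := by positivity
  have hρlt : ρ < 1 := by
    rw [hρdef, div_lt_one hlm]
    nlinarith
  set s : Fin n → ℝ := fun i => 1 / (1 + lam * q i) with hsdef
  have hsq : ∀ i, (0:ℝ) < 1 + lam * q i := fun i => by nlinarith [hqpos i]
  have hspos : ∀ i, 0 < s i := fun i => by
    have := hsq i; simp only [hsdef]; positivity
  have hsρ : ∀ i, s i ≤ ρ := fun i => by
    apply one_div_le_one_div_of_le hlm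
    nlinarith [hqm i]
  have hs1 : ∀ i, s i ≤ 1 := fun i => le_trans (hsρ i) hρlt.le
  -- basis
  let b : Module.Basis (Fin n) ℝ (Fin n → ℝ) :=
    basisOfLinearIndependentOfCardEqFinrank hgli
      (by simp [Module.finrank_fintype_fun_eq_card])
  have hb : ⇑b = g := coe_basisOfLinearIndependentOfCardEqFinrank hgli _
  -- g j ⬝ᵥ Q x in coordinates
  have hgdot : ∀ (j : Fin n) (v : Fin n → ℝ), g j ⬝ᵥ Q.mulVec v = b.repr v j * q j := by
    intro j v
    rw [hsymmdot]
    conv_lhs => rw [← b.sum_repr v, hb]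
    rw [hsumdot]
    rw [Finset.sum_eq_single j (fun i _ hij => by rw [hgconj i j hij, mul_zero])
      (fun h => absurd (Finset.mem_univ j) h)]
  -- norm formula
  have hnormsq : ∀ v : Fin n → ℝ, v ⬝ᵥ Q.mulVec v = ∑ i, (b.repr v i)^2 * q i := by
    intro v
    nth_rewrite 1 [← b.sum_repr v]
    rw [hb, hsumdot]
    refine Finset.sum_congr rfl fun i _ => ?_
    rw [hgdot i v]
    ring
  -- direction index
  set j : ℕ → Fin n := fun k => ⟨k % n, Nat.mod_lt k hn⟩ with hjdef
  -- step formula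
  have hstep : ∀ k : ℕ, x (k + 1) =
      x k - ((lam / (1 + lam * q (j k))) * (g (j k) ⬝ᵥ Q.mulVec (x k))) • g (j k) := by
    intro k
    set i := j k with hidef
    have hpp : vecMulVec (p k) (p k) = vecMulVec (g i) (g i) := by
      rcases hp k with h | h <;> rw [h]
      ext a c
      simp [vecMulVec_apply, hidef, hjdef]
    set c : ℝ := lam / (1 + lam * q i) with hcdef
    have hclam : c * (1 + lam * q i) = lam := by
      rw [hcdef]
      exact div_mul_cancel₀ lam (hsq i).ne'
    set A : Matrix (Fin n) (Fin n) ℝ := 1 + lam • (vecMulVec (p k) (p k) * Q) with hAdef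
    set B : Matrix (Fin n) (Fin n) ℝ := 1 - c • (vecMulVec (g i) (g i) * Q) with hBdef
    have hAmv : ∀ v, A *ᵥ v = v + (lam * (g i ⬝ᵥ Q.mulVec v)) • g i := by
      intro v
      rw [hAdef, add_mulVec, one_mulVec, smul_mulVec, hpp, ← mulVec_mulVec, hvmv,
        smul_smul]
    have hBmv : ∀ v, B *ᵥ v = v - (c * (g i ⬝ᵥ Q.mulVec v)) • g i := by
      intro v
      rw [hBdef, sub_mulVec, one_mulVec, smul_mulVec, ← mulVec_mulVec, hvmv,
        smul_smul]
    have hdotlin : ∀ (v : Fin n → ℝ) (t : ℝ),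
        g i ⬝ᵥ Q.mulVec (v + t • g i) = g i ⬝ᵥ Q.mulVec v + t * q i := by
      intro v t
      rw [mulVec_add, dotProduct_add, mulVec_smul, dotProduct_smul, smul_eq_mul]
    have hBA : ∀ v, B *ᵥ (A *ᵥ v) = v := by
      intro v
      rw [hAmv, hBmv, hdotlin]
      have : c * (g i ⬝ᵥ Q.mulVec v + lam * (g i ⬝ᵥ Q.mulVec v) * q i)
          = lam * (g i ⬝ᵥ Q.mulVec v) := by
        linear_combination (g i ⬝ᵥ Q.mulVec v) * hclam
      rw [this]
      abel
    have hAB : ∀ v, A *ᵥ (B *ᵥ v) = v := by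
      intro v
      have hsub : ∀ (w : Fin n → ℝ) (t : ℝ),
          g i ⬝ᵥ Q.mulVec (w - t • g i) = g i ⬝ᵥ Q.mulVec w - t * q i := by
        intro w t
        rw [mulVec_sub, dotProduct_sub, mulVec_smul, dotProduct_smul, smul_eq_mul]
      rw [hBmv, hAmv, hsub]
      have : lam * (g i ⬝ᵥ Q.mulVec v - c * (g i ⬝ᵥ Q.mulVec v) * q i)
          = c * (g i ⬝ᵥ Q.mulVec v) := by
        linear_combination (-(g i ⬝ᵥ Q.mulVec v)) * hclam
      rw [this]
      abel
    have hInj : Function.Injective (A.mulVec) := by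
      intro y z h
      have h2 : B *ᵥ (A *ᵥ y) = B *ᵥ (A *ᵥ z) := by rw [h]
      rwa [hBA, hBA] at h2
    have hUnit : IsUnit A := Matrix.mulVec_injective_iff_isUnit.mp hInj
    have hAinv : A⁻¹ * A = 1 :=
      Matrix.nonsing_inv_mul A ((Matrix.isUnit_iff_isUnit_det A).mp hUnit)
    have hfin : A⁻¹ *ᵥ (x k) = B *ᵥ (x k) := by
      conv_lhs => rw [← hAB (x k)]
      rw [mulVec_mulVec, hAinv, one_mulVec]
    rw [hupd k]
    rw [hfin, hBmv]
  -- coordinate recurrence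
  have hrec : ∀ (k : ℕ) (i : Fin n),
      b.repr (x (k + 1)) i = (if i = j k then s i else 1) * b.repr (x k) i := by
    intro k i
    rw [hstep k, map_sub, _root_.map_smul]
    have hrs : b.repr (g (j k)) = Finsupp.single (j k) 1 := by
      conv_lhs => rw [← hb]
      exact b.repr_self _
    rw [hgdot (j k) (x k), hrs]
    rw [Finsupp.sub_apply, Finsupp.smul_apply, Finsupp.single_apply]
    by_cases h : i = j k
    · rw [if_pos h, h]
      simp only [if_pos rfl, eq_self_iff_true, if_true, smul_eq_mul, mul_one]
      have h1 : (1 : ℝ) + lam * q (j k) ≠ 0 := ne_of_gt (hsq (j k))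
      simp only [hsdef]
      field_simp
      ring
    · have h' : ¬ (j k = i) := fun hh => h hh.symm
      simp [h, h']
  -- cycle lemma
  have hjval : ∀ (k t : ℕ) (ht : t < n), j (k * n + t) = ⟨t, ht⟩ := by
    intro k t ht
    have hmod : (k * n + t) % n = t := by
      rw [Nat.add_mod, Nat.mul_mod_left, zero_add, Nat.mod_mod_of_dvd, Nat.mod_eq_of_lt ht]
      exact dvd_refl n
    simp only [hjdef]
    exact Fin.ext hmod
  have hcyc : ∀ (k t : ℕ), t ≤ n → ∀ i : Fin n,
      b.repr (x (k * n + t)) i = (if (i : ℕ) < t then s i else 1) * b.repr (x (k * n)) i := by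
    intro k t
    induction t with
    | zero => intro _ i; simp
    | succ t ih =>
      intro ht i
      have ht' : t < n := Nat.lt_of_succ_le ht
      have : k * n + (t + 1) = (k * n + t) + 1 := rfl
      rw [this, hrec (k * n + t) i, ih (le_of_lt ht') i, hjval k t ht']
      by_cases h : i = ⟨t, ht'⟩
      · subst h
        simp only [if_pos rfl]
        have h1 : ¬ ((t : ℕ) < t) := lt_irrefl t
        have h2 : (t : ℕ) < t + 1 := Nat.lt_succ_self t
        simp [h1, h2]
      · have h' : (i : ℕ) ≠ t := fun hh => h (Fin.ext hh)
        have hiff : ((i : ℕ) < t + 1) ↔ ((i : ℕ) < t) := by omega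
        rw [if_neg h, one_mul, if_congr hiff rfl rfl]
  have hcycn : ∀ (k : ℕ) (i : Fin n),
      b.repr (x ((k + 1) * n)) i = s i * b.repr (x (k * n)) i := by
    intro k i
    have h := hcyc k n le_rfl i
    rw [show (k + 1) * n = k * n + n by ring]
    rw [h, if_pos i.isLt]
  -- norms
  set N : ℕ → ℝ := fun k => x k ⬝ᵥ Q.mulVec (x k) with hNdef
  have hNsum : ∀ k, N k = ∑ i, (b.repr (x k) i)^2 * q i := fun k => hnormsq (x k)
  have hNnonneg : ∀ k, 0 ≤ N k := by
    intro k
    rw [hNsum]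
    exact Finset.sum_nonneg fun i _ => mul_nonneg (sq_nonneg _) (hqpos i).le
  have hNmono : ∀ k, N (k + 1) ≤ N k := by
    intro k
    rw [hNsum, hNsum]
    refine Finset.sum_le_sum fun i _ => ?_
    rw [hrec k i]
    by_cases h : i = j k
    · rw [if_pos h]
      have h1 := hspos i
      have h2 := hs1 i
      have h3 : s i ^ 2 ≤ 1 := by nlinarith
      have h4 : (0:ℝ) ≤ (1 - s i ^ 2) * (b.repr (x k) i) ^ 2 * q i :=
        mul_nonneg (mul_nonneg (by linarith) (sq_nonneg _)) (hqpos i).le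
      nlinarith [h4]
    · rw [if_neg h, one_mul]
  have hNcyc : ∀ k, N ((k + 1) * n) ≤ ρ^2 * N (k * n) := by
    intro k
    rw [hNsum, hNsum, Finset.mul_sum]
    refine Finset.sum_le_sum fun i _ => ?_
    rw [hcycn k i]
    have h1 := hspos i
    have h2 := hsρ i
    have h3 : s i ^ 2 ≤ ρ ^ 2 := by nlinarith
    have h4 : (0:ℝ) ≤ (ρ ^ 2 - s i ^ 2) * (b.repr (x (k * n)) i) ^ 2 * q i :=
      mul_nonneg (mul_nonneg (by linarith) (sq_nonneg _)) (hqpos i).le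
    nlinarith [h4]
  -- part 1
  have part1 : ∀ k : ℕ, Real.sqrt (N (k * n)) ≤ ρ ^ k * Real.sqrt (N 0) := by
    intro k
    induction k with
    | zero => simp
    | succ k ih =>
      have h1 : Real.sqrt (N ((k + 1) * n)) ≤ Real.sqrt (ρ^2 * N (k * n)) :=
        Real.sqrt_le_sqrt (hNcyc k)
      rw [Real.sqrt_mul (sq_nonneg ρ), Real.sqrt_sq hρpos.le] at h1
      calc Real.sqrt (N ((k + 1) * n)) ≤ ρ * Real.sqrt (N (k * n)) := h1
        _ ≤ ρ * (ρ ^ k * Real.sqrt (N 0)) := by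
            exact mul_le_mul_of_nonneg_left ih hρpos.le
        _ = ρ ^ (k + 1) * Real.sqrt (N 0) := by ring
  -- part 2
  have part2 : Antitone fun k : ℕ => Real.sqrt (N k) :=
    antitone_nat_of_succ_le fun k => Real.sqrt_le_sqrt (hNmono k)
  -- part 3
  have hbound : ∀ k : ℕ, Real.sqrt (N k) ≤ ρ ^ (k / n) * Real.sqrt (N 0) := by
    intro k
    calc Real.sqrt (N k) ≤ Real.sqrt (N ((k / n) * n)) :=
          part2 (Nat.div_mul_le_self k n)
      _ ≤ ρ ^ (k / n) * Real.sqrt (N 0) := part1 (k / n)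
  have part3 : Tendsto (fun k : ℕ => Real.sqrt (N k)) atTop (𝓝 0) := by
    have hg : Tendsto (fun k : ℕ => ρ ^ (k / n) * Real.sqrt (N 0)) atTop (𝓝 0) := by
      have h1 : Tendsto (fun k : ℕ => ρ ^ k) atTop (𝓝 0) :=
        tendsto_pow_atTop_nhds_zero_of_lt_one hρpos.le hρlt
      have h2 : Tendsto (fun k : ℕ => k / n) atTop atTop :=
        Nat.tendsto_div_const_atTop hn.ne'
      have := (h1.comp h2).mul_const (Real.sqrt (N 0))
      simpa using this
    exact squeeze_zero (fun k => Real.sqrt_nonneg _) hbound hg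
  -- part 4
  have part4 : Tendsto x atTop (𝓝 0) := by
    rw [tendsto_pi_nhds]
    intro i
    show Tendsto (fun k => x k i) atTop (𝓝 0)
    have hbd : ∀ k, ‖x k i‖ ≤ Real.sqrt (N k) / Real.sqrt m := by
      intro k
      have h1 : (x k i) ^ 2 ≤ x k ⬝ᵥ x k := by
        have hxx : x k ⬝ᵥ x k = ∑ a, (x k a) ^ 2 := by
          simp [dotProduct, sq]
        rw [hxx]
        exact Finset.single_le_sum (fun a _ => sq_nonneg (x k a)) (Finset.mem_univ i)
      have h2 : x k ⬝ᵥ x k ≤ N k / m := by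
        rw [le_div_iff₀ hm, mul_comm]
        exact hmlb (x k)
      have h3 : |x k i| ≤ Real.sqrt (N k / m) :=
        Real.abs_le_sqrt (le_trans h1 h2)
      rw [Real.norm_eq_abs]
      rwa [Real.sqrt_div (hNnonneg k) m] at h3
    have hg : Tendsto (fun k : ℕ => Real.sqrt (N k) / Real.sqrt m) atTop (𝓝 0) := by
      simpa using part3.div_const (Real.sqrt m)
    exact squeeze_zero_norm hbd hg
  -- part 5
  have part5 : ∃ C : ℝ, 0 < C ∧ ∀ k : ℕ,
      Real.sqrt (N k) ≤ C * (ρ ^ ((n : ℝ)⁻¹)) ^ k := by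
    refine ⟨Real.sqrt (N 0) / ρ + 1, by positivity, fun k => ?_⟩
    have hnR : (0:ℝ) < (n : ℝ) := Nat.cast_pos.mpr hn
    have ht : (ρ ^ ((n : ℝ)⁻¹)) ^ k = ρ ^ ((n : ℝ)⁻¹ * k) := by
      rw [← Real.rpow_natCast (ρ ^ ((n : ℝ)⁻¹)) k, ← Real.rpow_mul hρpos.le]
    have hk1 : (k : ℝ) / n - 1 ≤ ((k / n : ℕ) : ℝ) := by
      have h0 : k < ((k / n) + 1) * n := by
        have h1 := Nat.div_add_mod k n
        have h2 := Nat.mod_lt k hn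
        calc k = n * (k / n) + k % n := h1.symm
          _ < n * (k / n) + n := by omega
          _ = (k / n + 1) * n := by ring
      have h0' : (k : ℝ) < (((k / n : ℕ) : ℝ) + 1) * n := by exact_mod_cast h0
      rw [sub_le_iff_le_add, div_le_iff₀ hnR]
      nlinarith [h0']
    have hpow : ρ ^ (k / n) ≤ ρ ^ ((k : ℝ) / n - 1) := by
      rw [← Real.rpow_natCast ρ (k / n)]
      exact Real.rpow_le_rpow_of_exponent_ge hρpos hρlt.le hk1
    have hsplit : ρ ^ ((k : ℝ) / n - 1) = ρ ^ ((n : ℝ)⁻¹ * k) / ρ := by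
      rw [Real.rpow_sub hρpos, Real.rpow_one]
      congr 1
      ring
    calc Real.sqrt (N k) ≤ ρ ^ (k / n) * Real.sqrt (N 0) := hbound k
      _ ≤ (ρ ^ ((n : ℝ)⁻¹ * k) / ρ) * Real.sqrt (N 0) := by
          apply mul_le_mul_of_nonneg_right _ (Real.sqrt_nonneg _)
          exact le_trans hpow (le_of_eq hsplit)
      _ = (Real.sqrt (N 0) / ρ) * ρ ^ ((n : ℝ)⁻¹ * k) := by ring
      _ ≤ (Real.sqrt (N 0) / ρ + 1) * ρ ^ ((n : ℝ)⁻¹ * k) := by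
          apply mul_le_mul_of_nonneg_right _ (Real.rpow_nonneg hρpos.le _)
          linarith
      _ = (Real.sqrt (N 0) / ρ + 1) * (ρ ^ ((n : ℝ)⁻¹)) ^ k := by rw [ht]
  exact ⟨part1, part2, part3, part4, part5⟩
end

section
/- Let f(x) = ½xᵀQx with Q ∈ ℝ^{n×n} symmetric positive definite with smallest eigenvalue m > 0, and let {xᵏ} be the DPPM iterates with search directions cycling through a Q-conjugate unit-vector basis and with iteration-dependent parameter λ(k) > 0 that is monotone nondecreasing in k, so that x^{k+1} = (I + λ(k)·p̄ₖp̄ₖᵀQ)⁻¹·xᵏ. If there exists c > 1 with λ((k+1)n)/λ(kn) ≥ c for all k ≥ 0, then ‖x^{(k+1)n}‖_Q / ‖x^{kn}‖_Q ≤ 1/(1 + cᵏ·λ(0)·m) for all k ≥ 0; hence the ratio of successive cycle errors tends to 0, the sequence {xᵏ} converges to the optimal point x* = 0, and the convergence is R-superlinear. -/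
open Matrix Filter Topology

private lemma dppm_aux_mulVec_sum {n : ℕ} (M : Matrix (Fin n) (Fin n) ℝ)
    (v : Fin n → (Fin n → ℝ)) : M.mulVec (∑ i, v i) = ∑ i, M.mulVec (v i) := by
  ext i
  simp only [Matrix.mulVec, dotProduct, Finset.sum_apply, Finset.mul_sum]
  exact Finset.sum_comm

private lemma dppm_aux_sum_dot {n : ℕ} (v : Fin n → (Fin n → ℝ)) (w : Fin n → ℝ) :
    (∑ i, v i) ⬝ᵥ w = ∑ i, v i ⬝ᵥ w := by
  simp only [dotProduct, Finset.sum_apply, Finset.sum_mul]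
  exact Finset.sum_comm

private lemma dppm_aux_dot_sum {n : ℕ} (v : Fin n → (Fin n → ℝ)) (w : Fin n → ℝ) :
    w ⬝ᵥ (∑ i, v i) = ∑ i, w ⬝ᵥ v i := by
  simp only [dotProduct, Finset.sum_apply, Finset.mul_sum]
  exact Finset.sum_comm

private lemma dppm_aux_vmv_mulVec {n : ℕ} (u w v : Fin n → ℝ) :
    (vecMulVec u w).mulVec v = (w ⬝ᵥ v) • u := by
  ext i
  simp only [Matrix.mulVec, vecMulVec_apply, dotProduct, Pi.smul_apply, smul_eq_mul,
    Finset.sum_mul]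
  exact Finset.sum_congr rfl fun j _ => by ring

private lemma dppm_aux_vmv_mul {n : ℕ} (u w : Fin n → ℝ) (M : Matrix (Fin n) (Fin n) ℝ) :
    vecMulVec u w * M = vecMulVec u (w ᵥ* M) := by
  ext i j
  simp only [Matrix.mul_apply, vecMulVec_apply, Matrix.vecMul, dotProduct, Finset.mul_sum]
  exact Finset.sum_congr rfl fun l _ => by ring

private lemma dppm_aux_vmv_mul_vmv {n : ℕ} (a b c d : Fin n → ℝ) :
    vecMulVec a b * vecMulVec c d = (b ⬝ᵥ c) • vecMulVec a d := by
  ext i j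
  simp only [Matrix.mul_apply, vecMulVec_apply, dotProduct, Matrix.smul_apply, smul_eq_mul,
    Finset.sum_mul]
  exact Finset.sum_congr rfl fun l _ => by ring

/-- R-superlinear convergence of the DPPM with geometrically increasing
parameters and cyclic Q-conjugate search directions for a strongly convex quadratic
(Proposition 2(ii) of the paper). -/
theorem dppm_quadratic_R_superlinear {n : ℕ} (hn : 0 < n)
    (Q : Matrix (Fin n) (Fin n) ℝ) (hQsymm : Q.IsSymm) (hQpd : Q.PosDef)
    (m : ℝ) (hm : 0 < m)
    (hmeig : ∃ y : Fin n → ℝ, y ≠ 0 ∧ Q.mulVec y = m • y)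
    (hmlb : ∀ y : Fin n → ℝ, m * (y ⬝ᵥ y) ≤ y ⬝ᵥ Q.mulVec y)
    (g : Fin n → (Fin n → ℝ))
    (hgunit : ∀ i, g i ⬝ᵥ g i = 1)
    (hgconj : ∀ i j, i ≠ j → g i ⬝ᵥ Q.mulVec (g j) = 0)
    (hgli : LinearIndependent ℝ g)
    (lam : ℕ → ℝ) (hlampos : ∀ k, 0 < lam k) (hlammono : Monotone lam)
    (c : ℝ) (hc : 1 < c)
    (hratio : ∀ k : ℕ, c ≤ lam ((k + 1) * n) / lam (k * n))
    (p : ℕ → (Fin n → ℝ))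
    (hp : ∀ k : ℕ, p k = g ⟨k % n, Nat.mod_lt k hn⟩ ∨ p k = -g ⟨k % n, Nat.mod_lt k hn⟩)
    (x : ℕ → (Fin n → ℝ))
    (hupd : ∀ k : ℕ,
      x (k + 1) = (1 + lam k • (vecMulVec (p k) (p k) * Q))⁻¹.mulVec (x k)) :
    (∀ k : ℕ, Real.sqrt (x ((k + 1) * n) ⬝ᵥ Q.mulVec (x ((k + 1) * n))) ≤
        (1 / (1 + c ^ k * lam 0 * m)) *
          Real.sqrt (x (k * n) ⬝ᵥ Q.mulVec (x (k * n)))) ∧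
    Tendsto x atTop (𝓝 0) ∧
    (∃ δ : ℕ → ℝ, (∀ k, 0 < δ k) ∧
      (∀ k : ℕ, Real.sqrt (x (k * n) ⬝ᵥ Q.mulVec (x (k * n))) ≤ δ k) ∧
      Tendsto (fun k : ℕ => δ (k + 1) / δ k) atTop (𝓝 0)) := by
  haveI : Nonempty (Fin n) := ⟨⟨0, hn⟩⟩
  have hcpos : (0 : ℝ) < c := lt_trans one_pos hc
  -- the basis
  have hcard : Fintype.card (Fin n) = Module.finrank ℝ (Fin n → ℝ) := by
    simp [Module.finrank_fintype_fun_eq_card]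
  set b : Module.Basis (Fin n) ℝ (Fin n → ℝ) :=
    basisOfLinearIndependentOfCardEqFinrank hgli hcard with hbdef
  have hb : ∀ j, b j = g j := fun j => by
    rw [hbdef, coe_basisOfLinearIndependentOfCardEqFinrank]
  -- curvature along each direction
  set q : Fin n → ℝ := fun i => g i ⬝ᵥ Q.mulVec (g i) with hqdef
  have hq : ∀ i, m ≤ q i := fun i => by
    have := hmlb (g i); rwa [hgunit i, mul_one] at this
  have hqpos : ∀ i, 0 < q i := fun i => lt_of_lt_of_le hm (hq i)
  -- single step in coordinates
  have hstep : ∀ (k : ℕ) (j : Fin n),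
      b.repr (x (k + 1)) j =
        (if (j : ℕ) = k % n then (1 + lam k * q j)⁻¹ else 1) * b.repr (x k) j := by
    intro k j
    set i : Fin n := ⟨k % n, Nat.mod_lt k hn⟩ with hidef
    have hqp : p k ⬝ᵥ Q.mulVec (p k) = q i := by
      rcases hp k with h | h <;> rw [h] <;>
        simp [Matrix.mulVec_neg, neg_dotProduct, dotProduct_neg, hqdef, ← hidef]
    set μ : ℝ := 1 + lam k * q i with hμdef
    have hμpos : 0 < μ := by
      have h1 := hlampos k; have h2 := hqpos i
      have := mul_pos h1 h2; rw [hμdef]; linarith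
    set M : Matrix (Fin n) (Fin n) ℝ := vecMulVec (p k) (p k) * Q with hMdef
    have hMv : ∀ v, M.mulVec v = (p k ⬝ᵥ Q.mulVec v) • p k := by
      intro v
      rw [hMdef, ← Matrix.mulVec_mulVec, dppm_aux_vmv_mulVec]
    have hMM : M * M = q i • M := by
      rw [hMdef, dppm_aux_vmv_mul, dppm_aux_vmv_mul_vmv]
      have : (p k ᵥ* Q) ⬝ᵥ p k = q i := by
        rw [← Matrix.dotProduct_mulVec]; exact hqp
      rw [this]
    have hAB : (1 + lam k • M) * (1 - (lam k / μ) • M) = 1 := by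
      have expand : (1 + lam k • M) * (1 - (lam k / μ) • M)
          = 1 + (lam k - lam k / μ - lam k * (lam k / μ) * q i) • M := by
        have h1 : (lam k • M) * ((lam k / μ) • M) = (lam k * (lam k / μ) * q i) • M := by
          rw [smul_mul_assoc, mul_smul_comm, hMM, smul_smul, smul_smul]
        rw [mul_sub, mul_one, add_mul, one_mul, h1, sub_smul, sub_smul]
        abel
      rw [expand]
      have hs : lam k - lam k / μ - lam k * (lam k / μ) * q i = 0 := by
        field_simp
        rw [hμdef]; ring
      rw [hs, zero_smul, add_zero]
    have hBinv : (1 + lam k • M)⁻¹ = 1 - (lam k / μ) • M := Matrix.inv_eq_right_inv hAB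
    have hxk : x (k + 1) = (1 - (lam k / μ) • M).mulVec (x k) := by
      rw [hupd k, ← hMdef, hBinv]
    have hBg : ∀ j : Fin n,
        (1 - (lam k / μ) • M).mulVec (g j) = (if j = i then μ⁻¹ else 1) • g j := by
      intro j
      rw [Matrix.sub_mulVec, Matrix.one_mulVec, Matrix.smul_mulVec, hMv]
      by_cases hji : j = i
      · have hpq : (p k ⬝ᵥ Q.mulVec (g i)) • p k = q i • g i := by
          rcases hp k with h | h <;> rw [h] <;>
            simp [hqdef, neg_dotProduct, dotProduct_neg, smul_neg, ← hidef]
        rw [if_pos hji, hji, hpq, smul_smul]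
        have : (1 : ℝ) - lam k / μ * q i = μ⁻¹ := by
          field_simp
          rw [hμdef]; ring
        rw [← this, sub_smul, one_smul]
      · have hij : i ≠ j := fun h => hji h.symm
        have hdot : p k ⬝ᵥ Q.mulVec (g j) = 0 := by
          rcases hp k with h | h <;> rw [h] <;>
            simp [neg_dotProduct, ← hidef, hgconj i j hij]
        rw [hdot, zero_smul, smul_zero, sub_zero, if_neg hji, one_smul]
    have hxsum : x (k + 1) = ∑ j, ((if j = i then μ⁻¹ else 1) * b.repr (x k) j) • g j := by
      conv_lhs => rw [hxk]
      have hxrep : x k = ∑ j, b.repr (x k) j • g j := by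
        conv_lhs => rw [← Module.Basis.sum_repr b (x k)]
        exact Finset.sum_congr rfl fun j _ => by rw [hb]
      conv_lhs => rw [hxrep]
      rw [dppm_aux_mulVec_sum]
      refine Finset.sum_congr rfl fun j _ => ?_
      rw [Matrix.mulVec_smul, hBg, smul_smul, mul_comm]
    have hrepr : b.repr (x (k + 1)) j = (if j = i then μ⁻¹ else 1) * b.repr (x k) j := by
      rw [hxsum]
      have : ∀ j : Fin n, ((if j = i then μ⁻¹ else 1) * b.repr (x k) j) • g j
          = ((if j = i then μ⁻¹ else 1) * b.repr (x k) j) • b j := by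
        intro j; rw [hb]
      simp_rw [this]
      exact congrFun (Module.Basis.repr_sum_self b _) j
    rw [hrepr]
    congr 1
    by_cases hji : j = i
    · rw [if_pos hji, if_pos (by rw [hji, hidef]), hji, hμdef]
    · rw [if_neg hji, if_neg (fun h => hji (Fin.ext (by rw [h, hidef])))]
  -- a full cycle in coordinates
  have hcycle0 : ∀ (k r : ℕ), r ≤ n → ∀ j : Fin n,
      b.repr (x (k * n + r)) j =
        (if (j : ℕ) < r then (1 + lam (k * n + (j : ℕ)) * q j)⁻¹ else 1) *
          b.repr (x (k * n)) j := by
    intro k r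
    induction r with
    | zero => intro _ j; simp
    | succ r ih =>
      intro hr j
      have hrn : r < n := hr
      have hmod : (k * n + r) % n = r := by
        conv_lhs => rw [Nat.mul_comm k n]
        rw [Nat.mul_add_mod]
        exact Nat.mod_eq_of_lt hrn
      rw [show k * n + (r + 1) = (k * n + r) + 1 from rfl, hstep (k * n + r) j,
        ih (le_of_lt hrn) j, hmod]
      rcases lt_trichotomy (j : ℕ) r with h | h | h
      · rw [if_neg (by omega), if_pos h, if_pos (by omega), one_mul]
      · rw [if_pos h, if_neg (by omega), if_pos (by omega), one_mul, h]
      · rw [if_neg (by omega), if_neg (by omega), if_neg (by omega), one_mul]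
  have hcycle : ∀ (k : ℕ) (j : Fin n),
      b.repr (x ((k + 1) * n)) j =
        (1 + lam (k * n + (j : ℕ)) * q j)⁻¹ * b.repr (x (k * n)) j := by
    intro k j
    have := hcycle0 k n le_rfl j
    rw [if_pos j.isLt] at this
    rw [show (k + 1) * n = k * n + n by ring]
    exact this
  -- the Q-norm in coordinates
  have hnormsq : ∀ y : Fin n → ℝ,
      y ⬝ᵥ Q.mulVec y = ∑ j, q j * (b.repr y j) ^ 2 := by
    intro y
    have hy : y = ∑ i, b.repr y i • g i := by
      conv_lhs => rw [← Module.Basis.sum_repr b y]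
      exact Finset.sum_congr rfl fun i _ => by rw [hb]
    calc y ⬝ᵥ Q.mulVec y
        = ∑ i, ∑ j, (b.repr y i * b.repr y j) * (g i ⬝ᵥ Q.mulVec (g j)) := by
          conv_lhs => rw [hy]
          rw [show Q.mulVec (∑ i, b.repr y i • g i) = ∑ i, Q.mulVec (b.repr y i • g i) from
            dppm_aux_mulVec_sum Q _, dppm_aux_sum_dot]
          refine Finset.sum_congr rfl fun i _ => ?_
          rw [dppm_aux_dot_sum]
          refine Finset.sum_congr rfl fun j _ => ?_
          rw [Matrix.mulVec_smul, smul_dotProduct, dotProduct_smul, smul_eq_mul, smul_eq_mul]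
          ring
      _ = ∑ j, q j * (b.repr y j) ^ 2 := by
          refine Finset.sum_congr rfl fun i _ => ?_
          rw [Finset.sum_eq_single i
            (fun j _ hji => by rw [hgconj i j (fun h => hji h.symm), mul_zero])
            (fun h => absurd (Finset.mem_univ i) h)]
          rw [hqdef]; ring
  -- lower bound on the parameters at cycle starts
  have hlamlow : ∀ k : ℕ, c ^ k * lam 0 ≤ lam (k * n) := by
    intro k
    induction k with
    | zero => simp
    | succ k ih =>
      have h1 : c * lam (k * n) ≤ lam ((k + 1) * n) := by
        have h := hratio k
        rw [le_div_iff₀ (hlampos (k * n))] at h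
        exact h
      calc c ^ (k + 1) * lam 0 = c * (c ^ k * lam 0) := by ring
        _ ≤ c * lam (k * n) := mul_le_mul_of_nonneg_left ih (le_of_lt hcpos)
        _ ≤ lam ((k + 1) * n) := h1
  -- Part 1 : cycle contraction
  have key1 : ∀ k : ℕ, Real.sqrt (x ((k + 1) * n) ⬝ᵥ Q.mulVec (x ((k + 1) * n))) ≤
      (1 / (1 + c ^ k * lam 0 * m)) * Real.sqrt (x (k * n) ⬝ᵥ Q.mulVec (x (k * n))) := by
    intro k
    set t : ℝ := 1 + c ^ k * lam 0 * m with htdef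
    have htaux : 0 < c ^ k * lam 0 * m :=
      mul_pos (mul_pos (pow_pos hcpos k) (hlampos 0)) hm
    have htpos : 0 < t := by rw [htdef]; linarith
    have hfac : ∀ j : Fin n, t ≤ 1 + lam (k * n + (j : ℕ)) * q j := by
      intro j
      have h1 : c ^ k * lam 0 ≤ lam (k * n + (j : ℕ)) :=
        le_trans (hlamlow k) (hlammono (Nat.le_add_right _ _))
      have h2 : c ^ k * lam 0 * m ≤ lam (k * n + (j : ℕ)) * q j :=
        mul_le_mul h1 (hq j) (le_of_lt hm)
          (le_of_lt (lt_of_le_of_lt (by linarith) (lt_of_le_of_lt (le_refl _)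
            (lt_of_lt_of_le (hlampos (k * n + (j : ℕ))) (le_refl _)))))
      rw [htdef]; linarith
    have hsq : x ((k + 1) * n) ⬝ᵥ Q.mulVec (x ((k + 1) * n)) ≤
        t⁻¹ ^ 2 * (x (k * n) ⬝ᵥ Q.mulVec (x (k * n))) := by
      rw [hnormsq, hnormsq, Finset.mul_sum]
      refine Finset.sum_le_sum fun j _ => ?_
      rw [hcycle k j]
      set a : ℝ := 1 + lam (k * n + (j : ℕ)) * q j with hadef
      have hapos : 0 < a := lt_of_lt_of_le htpos (hfac j)
      have hainv : a⁻¹ ≤ t⁻¹ := inv_anti₀ htpos (hfac j)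
      have h2 : a⁻¹ ^ 2 ≤ t⁻¹ ^ 2 :=
        pow_le_pow_left₀ (inv_nonneg.mpr (le_of_lt hapos)) hainv 2
      set r : ℝ := b.repr (x (k * n)) j
      calc q j * (a⁻¹ * r) ^ 2 = a⁻¹ ^ 2 * (q j * r ^ 2) := by ring
        _ ≤ t⁻¹ ^ 2 * (q j * r ^ 2) := mul_le_mul_of_nonneg_right h2
            (mul_nonneg (le_of_lt (hqpos j)) (sq_nonneg r))
    calc Real.sqrt (x ((k + 1) * n) ⬝ᵥ Q.mulVec (x ((k + 1) * n)))
        ≤ Real.sqrt (t⁻¹ ^ 2 * (x (k * n) ⬝ᵥ Q.mulVec (x (k * n)))) := Real.sqrt_le_sqrt hsq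
      _ = t⁻¹ * Real.sqrt (x (k * n) ⬝ᵥ Q.mulVec (x (k * n))) := by
          rw [Real.sqrt_mul (sq_nonneg _), Real.sqrt_sq (inv_nonneg.mpr (le_of_lt htpos))]
      _ = (1 / t) * Real.sqrt (x (k * n) ⬝ᵥ Q.mulVec (x (k * n))) := by rw [one_div]
  -- per-step monotonicity of the Q-norm
  have hdec : ∀ k : ℕ, x (k + 1) ⬝ᵥ Q.mulVec (x (k + 1)) ≤ x k ⬝ᵥ Q.mulVec (x k) := by
    intro k
    rw [hnormsq, hnormsq]
    refine Finset.sum_le_sum fun j _ => ?_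
    rw [hstep k j]
    set s : ℝ := if (j : ℕ) = k % n then (1 + lam k * q j)⁻¹ else 1 with hsdef
    have hs0 : 0 ≤ s := by
      rw [hsdef]; split_ifs with h
      · exact inv_nonneg.mpr (by nlinarith [hlampos k, hqpos j])
      · exact zero_le_one
    have hs1 : s ≤ 1 := by
      rw [hsdef]; split_ifs with h
      · exact inv_le_one_of_one_le₀ (by nlinarith [hlampos k, hqpos j])
      · exact le_refl 1
    set r : ℝ := b.repr (x k) j
    have hss : s * s ≤ 1 := mul_le_one₀ hs1 hs0 hs1
    nlinarith [hss, sq_nonneg r, (hqpos j).le, mul_nonneg (hqpos j).le (sq_nonneg r)]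
  -- the Q-norm sequence
  set N : ℕ → ℝ := fun k => Real.sqrt (x k ⬝ᵥ Q.mulVec (x k)) with hNdef
  have hNnonneg : ∀ k, 0 ≤ N k := fun k => Real.sqrt_nonneg _
  have hNanti : Antitone N :=
    antitone_nat_of_succ_le fun k => Real.sqrt_le_sqrt (hdec k)
  set rr : ℝ := 1 / (1 + lam 0 * m) with hrrdef
  have hlm : 0 < lam 0 * m := mul_pos (hlampos 0) hm
  have hrr0 : 0 < rr := by rw [hrrdef]; positivity
  have hrr1 : rr < 1 := by
    rw [hrrdef, div_lt_one (by linarith)]; linarith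
  have hNcyc : ∀ k : ℕ, N (k * n) ≤ rr ^ k * N 0 := by
    intro k
    induction k with
    | zero => simp
    | succ k ih =>
      have hck : (1 : ℝ) ≤ c ^ k := one_le_pow₀ (le_of_lt hc)
      have hle : 1 / (1 + c ^ k * lam 0 * m) ≤ rr := by
        rw [hrrdef]
        apply one_div_le_one_div_of_le (by linarith)
        nlinarith
      calc N ((k + 1) * n) ≤ (1 / (1 + c ^ k * lam 0 * m)) * N (k * n) := key1 k
        _ ≤ rr * N (k * n) := mul_le_mul_of_nonneg_right hle (hNnonneg _)
        _ ≤ rr * (rr ^ k * N 0) := mul_le_mul_of_nonneg_left ih (le_of_lt hrr0)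
        _ = rr ^ (k + 1) * N 0 := by ring
  have hNall : ∀ k : ℕ, N k ≤ rr ^ (k / n) * N 0 := fun k =>
    le_trans (hNanti (Nat.div_mul_le_self k n)) (hNcyc (k / n))
  have hdivtop : Tendsto (fun k : ℕ => k / n) atTop atTop :=
    le_of_eq (Filter.map_div_atTop_eq_nat n hn)
  have hpow0 : Tendsto (fun j : ℕ => rr ^ j * N 0) atTop (𝓝 0) := by
    have := (tendsto_pow_atTop_nhds_zero_of_lt_one (le_of_lt hrr0) hrr1).mul_const (N 0)
    rwa [zero_mul] at this
  have hNto0 : Tendsto N atTop (𝓝 0) :=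
    squeeze_zero hNnonneg hNall (hpow0.comp hdivtop)
  -- Part 2 : convergence of the iterates
  have key2 : Tendsto x atTop (𝓝 0) := by
    rw [tendsto_pi_nhds]
    intro i
    have hQform : ∀ k, 0 ≤ x k ⬝ᵥ Q.mulVec (x k) := by
      intro k
      refine le_trans ?_ (hmlb (x k))
      have : 0 ≤ x k ⬝ᵥ x k :=
        Finset.sum_nonneg fun j _ => mul_self_nonneg _
      positivity
    have habs : ∀ k, |x k i| ≤ N k * (Real.sqrt m)⁻¹ := by
      intro k
      have h1 : m * (x k ⬝ᵥ x k) ≤ N k ^ 2 := by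
        rw [hNdef]; rw [Real.sq_sqrt (hQform k)]; exact hmlb (x k)
      have h2 : x k i ^ 2 ≤ x k ⬝ᵥ x k := by
        rw [sq]
        exact Finset.single_le_sum (f := fun j => x k j * x k j)
          (fun j _ => mul_self_nonneg _) (Finset.mem_univ i)
      have h3 : x k i ^ 2 ≤ N k ^ 2 / m := by
        rw [le_div_iff₀ hm]; nlinarith
      calc |x k i| = Real.sqrt (x k i ^ 2) := (Real.sqrt_sq_eq_abs _).symm
        _ ≤ Real.sqrt (N k ^ 2 / m) := Real.sqrt_le_sqrt h3
        _ = N k * (Real.sqrt m)⁻¹ := by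
            rw [Real.sqrt_div (sq_nonneg _), Real.sqrt_sq (hNnonneg k), div_eq_mul_inv]
    simp only [Pi.zero_apply]
    rw [tendsto_zero_iff_abs_tendsto_zero]
    have hg0 : Tendsto (fun k => N k * (Real.sqrt m)⁻¹) atTop (𝓝 0) := by
      have := hNto0.mul_const (Real.sqrt m)⁻¹
      rwa [zero_mul] at this
    exact squeeze_zero (fun k => abs_nonneg _) habs hg0
  -- Part 3 : the dominating sequence
  set T : ℕ → ℝ := fun j => 1 + c ^ j * lam 0 * m with hTdef
  have hTpos : ∀ j, 0 < T j := by
    intro j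
    have : 0 < c ^ j * lam 0 * m := mul_pos (mul_pos (pow_pos hcpos j) (hlampos 0)) hm
    rw [hTdef]; dsimp only; linarith
  set δ : ℕ → ℝ := fun k => (∏ j ∈ Finset.range k, (T j)⁻¹) * (N 0 + 1) with hδdef
  have hδpos : ∀ k, 0 < δ k := by
    intro k
    have hp1 : 0 < ∏ j ∈ Finset.range k, (T j)⁻¹ :=
      Finset.prod_pos fun j _ => inv_pos.mpr (hTpos j)
    have : 0 < N 0 + 1 := by have := hNnonneg 0; linarith
    exact mul_pos hp1 this
  have hδsucc : ∀ k, δ (k + 1) = (T k)⁻¹ * δ k := by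
    intro k
    rw [hδdef]
    dsimp only
    rw [Finset.prod_range_succ]
    ring
  have hδbd : ∀ k, N (k * n) ≤ δ k := by
    intro k
    induction k with
    | zero =>
      have : δ 0 = N 0 + 1 := by rw [hδdef]; simp
      rw [Nat.zero_mul, this]; linarith [hNnonneg 0]
    | succ k ih =>
      calc N ((k + 1) * n) ≤ (1 / T k) * N (k * n) := key1 k
        _ ≤ (1 / T k) * δ k := by
            exact mul_le_mul_of_nonneg_left ih (one_div_pos.mpr (hTpos k)).le
        _ = δ (k + 1) := by rw [hδsucc k, one_div]
  have hδratio : ∀ k, δ (k + 1) / δ k = (T k)⁻¹ := by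
    intro k
    rw [hδsucc k, mul_div_assoc, div_self (ne_of_gt (hδpos k)), mul_one]
  have hδto0 : Tendsto (fun k => δ (k + 1) / δ k) atTop (𝓝 0) := by
    have hfun : (fun k => δ (k + 1) / δ k) = fun k => (T k)⁻¹ := funext hδratio
    rw [hfun]
    have hTtop : Tendsto T atTop atTop := by
      rw [hTdef]
      apply tendsto_atTop_add_const_left
      exact (((tendsto_pow_atTop_atTop_of_one_lt hc).atTop_mul_const (hlampos 0)).atTop_mul_const hm)
    exact hTtop.inv_tendsto_atTop
  exact ⟨key1, key2, δ, hδpos, hδbd, hδto0⟩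
end
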